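/- If a formal series f ∈ V[[x,y]][x^{-1},y^{-1}] satisfies both (x-y)^N f = (x-y)^N g₁ inside V[[x]][x^{-1}][[y]][y^{-1}] and (x-y)^N f = (x-y)^N g₂ inside V[[y]][y^{-1}][[x]][x^{-1}] for some N, where g₁, g₂ are the respective expansions of a common element of V[[x,y]][x^{-1},y^{-1},(x-y)^{-1}], then applying the expansion maps i_{x,y} and i_{y,x} to (x-y)^{-N}·((x-y)^N f) recovers g₁ and g₂ respectively. -/

import Mathlib

lemma coeff_one_sub_pow (N j : ℕ) :
    (PowerSeries.coeff j) ((1 - PowerSeries.X) ^ N) = (-1 : ℂ) ^ j * (N.choose j : ℂ) := by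
  induction N generalizing j with
  | zero =>
    cases j with
    | zero => simp
    | succ j => simp [PowerSeries.coeff_one]
  | succ N ih =>
    rw [pow_succ, mul_sub, mul_one, map_sub]
    cases j with
    | zero => simp [PowerSeries.coeff_zero_mul_X, ih]
    | succ j =>
      rw [PowerSeries.coeff_succ_mul_X, ih, ih, Nat.choose_succ_succ]
      push_cast
      ring

lemma key_id (N : ℕ) (hN : 1 ≤ N) (m : ℕ) (hm : 1 ≤ m) :
    ∑ k ∈ Finset.range (N + 1),
      (if k ≤ m then (((m - k) + N - 1).choose (N - 1) : ℂ) * ((-1 : ℂ) ^ k * (N.choose k : ℂ))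
        else 0) = 0 := by
  have hps : ((1 - PowerSeries.X : PowerSeries ℂ) ^ N) *
      (PowerSeries.mk fun n => ((N - 1 + n).choose (N - 1) : ℂ)) = 1 := by
    have := PowerSeries.mk_add_choose_mul_one_sub_pow_eq_one ℂ (N - 1)
    rw [Nat.sub_add_cancel hN] at this
    rw [mul_comm]
    exact_mod_cast this
  have hco := congrArg (PowerSeries.coeff m) hps
  rw [PowerSeries.coeff_mul, PowerSeries.coeff_one, if_neg (by omega)] at hco
  rw [Finset.Nat.sum_antidiagonal_eq_sum_range_succ_mk] at hco
  simp only [coeff_one_sub_pow, PowerSeries.coeff_mk] at hco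
  have e1 : ∑ k ∈ Finset.range (N + 1),
      (if k ≤ m then (((m - k) + N - 1).choose (N - 1) : ℂ) * ((-1 : ℂ) ^ k * (N.choose k : ℂ))
        else 0)
      = ∑ k ∈ Finset.range (m + N + 1),
      (if k ≤ m then (((m - k) + N - 1).choose (N - 1) : ℂ) * ((-1 : ℂ) ^ k * (N.choose k : ℂ))
        else 0) := by
    refine Finset.sum_subset (Finset.range_subset_range.mpr (by omega)) (fun k _ hk => ?_)
    simp only [Finset.mem_range, not_lt] at hk
    rw [Nat.choose_eq_zero_of_lt (by omega : N < k)]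
    simp
  have e2 : ∑ k ∈ Finset.range (m + 1),
      (if k ≤ m then (((m - k) + N - 1).choose (N - 1) : ℂ) * ((-1 : ℂ) ^ k * (N.choose k : ℂ))
        else 0)
      = ∑ k ∈ Finset.range (m + N + 1),
      (if k ≤ m then (((m - k) + N - 1).choose (N - 1) : ℂ) * ((-1 : ℂ) ^ k * (N.choose k : ℂ))
        else 0) := by
    refine Finset.sum_subset (Finset.range_subset_range.mpr (by omega)) (fun k _ hk => ?_)
    simp only [Finset.mem_range, not_lt] at hk
    rw [if_neg (by omega)]
  rw [e1, ← e2]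
  rw [← hco]
  refine Finset.sum_congr rfl (fun k hk => ?_)
  simp only [Finset.mem_range] at hk
  rw [if_pos (by omega : k ≤ m), show (m - k) + N - 1 = N - 1 + (m - k) by omega]
  ring

lemma core_lemma {W : Type*} [AddCommGroup W] [Module ℂ W] (N : ℕ) (hN : 1 ≤ N) (T : ℕ)
    (hT : 1 ≤ T) (φ : ℤ → W) (hφ : ∀ m : ℕ, T ≤ m → φ (m : ℤ) = 0) :
    (∑ᶠ n : ℕ, ((n + N - 1).choose (N - 1) : ℂ) •
      ∑ k ∈ Finset.range (N + 1), ((-1 : ℂ) ^ k * (N.choose k : ℂ)) • φ ((n : ℤ) + (k : ℤ))) =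
      φ 0 := by
  have hsupp : (Function.support fun n : ℕ => ((n + N - 1).choose (N - 1) : ℂ) •
      ∑ k ∈ Finset.range (N + 1), ((-1 : ℂ) ^ k * (N.choose k : ℂ)) • φ ((n : ℤ) + (k : ℤ)))
      ⊆ ↑(Finset.range T) := by
    intro n hn
    simp only [Function.mem_support, ne_eq] at hn
    simp only [Finset.coe_range, Set.mem_Iio]
    by_contra hnT
    push_neg at hnT
    apply hn
    rw [Finset.sum_eq_zero, smul_zero]
    intro k _
    rw [show ((n : ℤ) + (k : ℤ)) = ((n + k : ℕ) : ℤ) by push_cast; ring,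
      hφ (n + k) (by omega), smul_zero]
  rw [finsum_eq_sum_of_support_subset _ hsupp]
  have step1 : ∑ n ∈ Finset.range T, ((n + N - 1).choose (N - 1) : ℂ) •
      ∑ k ∈ Finset.range (N + 1), ((-1 : ℂ) ^ k * (N.choose k : ℂ)) • φ ((n : ℤ) + (k : ℤ))
      = ∑ p ∈ Finset.range T ×ˢ Finset.range (N + 1),
        (((p.1 + N - 1).choose (N - 1) : ℂ) * ((-1 : ℂ) ^ p.2 * (N.choose p.2 : ℂ))) •
          φ ((p.1 : ℤ) + (p.2 : ℤ)) := by
    rw [Finset.sum_product]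
    refine Finset.sum_congr rfl (fun n _ => ?_)
    rw [Finset.smul_sum]
    exact Finset.sum_congr rfl (fun k _ => (smul_smul _ _ _))
  rw [step1]
  have step2 : ∑ p ∈ Finset.range T ×ˢ Finset.range (N + 1),
        (((p.1 + N - 1).choose (N - 1) : ℂ) * ((-1 : ℂ) ^ p.2 * (N.choose p.2 : ℂ))) •
          φ ((p.1 : ℤ) + (p.2 : ℤ))
      = ∑ p ∈ (Finset.range (T + N) ×ˢ Finset.range (N + 1)).filter
          (fun p => p.2 ≤ p.1 ∧ p.1 - p.2 < T),
        ((((p.1 - p.2) + N - 1).choose (N - 1) : ℂ) * ((-1 : ℂ) ^ p.2 * (N.choose p.2 : ℂ))) •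
          φ (p.1 : ℤ) := by
    refine Finset.sum_nbij' (i := fun p => (p.1 + p.2, p.2)) (j := fun p => (p.1 - p.2, p.2))
      ?_ ?_ ?_ ?_ ?_
    · intro p hp
      simp only [Finset.mem_product, Finset.mem_range, Finset.mem_filter] at hp ⊢
      omega
    · intro p hp
      simp only [Finset.mem_product, Finset.mem_range, Finset.mem_filter] at hp ⊢
      omega
    · intro p hp
      simp only [Nat.add_sub_cancel]
    · intro p hp
      simp only [Finset.mem_product, Finset.mem_range, Finset.mem_filter] at hp
      ext <;> simp <;> omega
    · intro p hp
      simp only [Nat.add_sub_cancel]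
      push_cast
      rfl
  rw [step2, Finset.sum_filter, Finset.sum_product]
  have step3 : ∀ m ∈ Finset.range (T + N),
      (∑ k ∈ Finset.range (N + 1), if k ≤ m ∧ m - k < T then
        ((((m - k) + N - 1).choose (N - 1) : ℂ) * ((-1 : ℂ) ^ k * (N.choose k : ℂ))) •
          φ (m : ℤ) else 0)
      = (∑ k ∈ Finset.range (N + 1), if k ≤ m ∧ m - k < T then
        ((((m - k) + N - 1).choose (N - 1) : ℂ) * ((-1 : ℂ) ^ k * (N.choose k : ℂ))) else 0) •
          φ (m : ℤ) := by
    intro m _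
    rw [Finset.sum_smul]
    refine Finset.sum_congr rfl (fun k _ => ?_)
    rw [ite_smul, zero_smul]
  rw [Finset.sum_congr rfl step3]
  rw [Finset.sum_eq_single_of_mem 0 (Finset.mem_range.mpr (by omega))]
  · rw [Finset.sum_eq_single_of_mem 0 (Finset.mem_range.mpr (by omega))]
    · rw [if_pos ⟨le_refl 0, by omega⟩]
      simp [Nat.choose_self, Nat.sub_add_cancel hN]
    · intro k _ hk
      rw [if_neg (by omega)]
  · intro m _ hm
    by_cases hmT : T ≤ m
    · rw [hφ m hmT, smul_zero]
    · have : (∑ k ∈ Finset.range (N + 1), if k ≤ m ∧ m - k < T then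
          ((((m - k) + N - 1).choose (N - 1) : ℂ) * ((-1 : ℂ) ^ k * (N.choose k : ℂ))) else 0)
          = 0 := by
        refine Eq.trans (Finset.sum_congr rfl (fun k _ => ?_)) (key_id N hN m (by omega))
        split_ifs <;> first | rfl | omega
      rw [this, zero_smul]


section

variable {V : Type*} [AddCommGroup V] [Module ℂ V]

/-- A doubly-infinite formal series lies in `V[[x,y]][x^{-1},y^{-1}]`. -/
def MemLaurentXY (f : ℤ → ℤ → V) : Prop :=
  ∃ A B : ℤ, ∀ i j : ℤ, (i < A ∨ j < B) → f i j = 0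

/-- Multiplication of a doubly-infinite formal series by `(x-y)^N`, coefficientwise. -/
noncomputable def mulXYpow (N : ℕ) (f : ℤ → ℤ → V) : ℤ → ℤ → V := fun i j =>
  ∑ k ∈ Finset.range (N + 1),
    ((-1 : ℂ) ^ k * (N.choose k : ℂ)) • f (i - ((N : ℤ) - k)) (j - k)

/-- The expansion map `i_{x,y}` applied to `G·(x-y)^{-N}` for `G ∈ V[[x,y]][x^{-1},y^{-1}]`:
`(x-y)^{-N}` is expanded as `Σ_{n≥0} binom(n+N-1, N-1) x^{-n-N} y^n`. -/
noncomputable def expandXY (N : ℕ) (G : ℤ → ℤ → V) : ℤ → ℤ → V := fun a b =>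
  ∑ᶠ n : ℕ, (((n + N - 1).choose (N - 1) : ℂ)) • G (a + N + n) (b - n)

/-- The expansion map `i_{y,x}` applied to `G·(x-y)^{-N}`:
`(x-y)^{-N}` is expanded as `(-1)^N Σ_{n≥0} binom(n+N-1, N-1) x^n y^{-n-N}`. -/
noncomputable def expandYX (N : ℕ) (G : ℤ → ℤ → V) : ℤ → ℤ → V := fun a b =>
  ∑ᶠ n : ℕ, ((-1 : ℂ) ^ N * ((n + N - 1).choose (N - 1) : ℂ)) • G (a - n) (b + N + n)

/-- If a formal series `f ∈ V[[x,y]][x^{-1},y^{-1}]` satisfies both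
`(x-y)^N f = (x-y)^N g₁` inside `V[[x]][x^{-1}][[y]][y^{-1}]` and
`(x-y)^N f = (x-y)^N g₂` inside `V[[y]][y^{-1}][[x]][x^{-1}]`, where
`g₁ = i_{x,y}(G₀·(x-y)^{-M})` and `g₂ = i_{y,x}(G₀·(x-y)^{-M})` are the respective
expansions of a common element `G₀·(x-y)^{-M}` of `V[[x,y]][x^{-1},y^{-1},(x-y)^{-1}]`,
then applying the expansion maps `i_{x,y}` and `i_{y,x}` to `(x-y)^{-N}·((x-y)^N f)`
recovers `g₁` and `g₂` respectively. -/
theorem expansion_recovers (N M : ℕ) (hN : 1 ≤ N) (hM : 1 ≤ M)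
    (f G₀ : ℤ → ℤ → V) (hf : MemLaurentXY f) (hG : MemLaurentXY G₀)
    (h1 : ∀ i j : ℤ, mulXYpow N f i j = mulXYpow N (expandXY M G₀) i j)
    (h2 : ∀ i j : ℤ, mulXYpow N f i j = mulXYpow N (expandYX M G₀) i j) :
    (∀ i j : ℤ, expandXY N (mulXYpow N f) i j = expandXY M G₀ i j) ∧
    (∀ i j : ℤ, expandYX N (mulXYpow N f) i j = expandYX M G₀ i j) := by
  obtain ⟨A, B, hAB⟩ := hG
  have hg1z : ∀ a b : ℤ, b < B → expandXY M G₀ a b = 0 := by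
    intro a b hb
    simp only [expandXY]
    refine finsum_eq_zero_of_forall_eq_zero (fun n => ?_)
    rw [hAB _ _ (Or.inr (by omega)), smul_zero]
  have hg2z : ∀ a b : ℤ, a < A → expandYX M G₀ a b = 0 := by
    intro a b ha
    simp only [expandYX]
    refine finsum_eq_zero_of_forall_eq_zero (fun n => ?_)
    rw [hAB _ _ (Or.inl (by omega)), smul_zero]
  constructor
  · intro i j
    set T : ℕ := (j - B + 1).toNat + 1 with hTdef
    have htn := Int.self_le_toNat (j - B + 1)
    have hφ : ∀ m : ℕ, T ≤ m → expandXY M G₀ (i + (m : ℤ)) (j - (m : ℤ)) = 0 := by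
      intro m hm
      exact hg1z _ _ (by omega)
    have hcore : (∑ᶠ n : ℕ, ((n + N - 1).choose (N - 1) : ℂ) •
        ∑ k ∈ Finset.range (N + 1), ((-1 : ℂ) ^ k * (N.choose k : ℂ)) •
          expandXY M G₀ (i + ((n : ℤ) + (k : ℤ))) (j - ((n : ℤ) + (k : ℤ))))
        = expandXY M G₀ (i + (0 : ℤ)) (j - (0 : ℤ)) :=
      core_lemma N hN T (by omega) (fun m : ℤ => expandXY M G₀ (i + m) (j - m)) hφ
    have step : (∑ᶠ n : ℕ, ((n + N - 1).choose (N - 1) : ℂ) •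
        mulXYpow N f (i + (N : ℤ) + (n : ℤ)) (j - (n : ℤ)))
        = ∑ᶠ n : ℕ, ((n + N - 1).choose (N - 1) : ℂ) •
        ∑ k ∈ Finset.range (N + 1), ((-1 : ℂ) ^ k * (N.choose k : ℂ)) •
          expandXY M G₀ (i + ((n : ℤ) + (k : ℤ))) (j - ((n : ℤ) + (k : ℤ))) := by
      refine finsum_congr (fun n => ?_)
      rw [h1]
      congr 1
      simp only [mulXYpow]
      refine Finset.sum_congr rfl (fun k _ => ?_)
      rw [show i + (N : ℤ) + (n : ℤ) - ((N : ℤ) - (k : ℤ)) = i + ((n : ℤ) + (k : ℤ)) by ring,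
        show j - (n : ℤ) - (k : ℤ) = j - ((n : ℤ) + (k : ℤ)) by ring]
    calc expandXY N (mulXYpow N f) i j
        = ∑ᶠ n : ℕ, ((n + N - 1).choose (N - 1) : ℂ) •
            mulXYpow N f (i + (N : ℤ) + (n : ℤ)) (j - (n : ℤ)) := rfl
      _ = _ := step
      _ = expandXY M G₀ (i + (0 : ℤ)) (j - (0 : ℤ)) := hcore
      _ = expandXY M G₀ i j := by norm_num
  · intro i j
    set T : ℕ := (i - A + 1).toNat + 1 with hTdef
    have htn := Int.self_le_toNat (i - A + 1)
    have hφ : ∀ m : ℕ, T ≤ m → expandYX M G₀ (i - (m : ℤ)) (j + (m : ℤ)) = 0 := by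
      intro m hm
      exact hg2z _ _ (by omega)
    have hcore : (∑ᶠ n : ℕ, ((n + N - 1).choose (N - 1) : ℂ) •
        ∑ k ∈ Finset.range (N + 1), ((-1 : ℂ) ^ k * (N.choose k : ℂ)) •
          expandYX M G₀ (i - ((n : ℤ) + (k : ℤ))) (j + ((n : ℤ) + (k : ℤ))))
        = expandYX M G₀ (i - (0 : ℤ)) (j + (0 : ℤ)) :=
      core_lemma N hN T (by omega) (fun m : ℤ => expandYX M G₀ (i - m) (j + m)) hφ
    have step : (∑ᶠ n : ℕ, ((-1 : ℂ) ^ N * ((n + N - 1).choose (N - 1) : ℂ)) •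
        mulXYpow N f (i - (n : ℤ)) (j + (N : ℤ) + (n : ℤ)))
        = ∑ᶠ n : ℕ, ((n + N - 1).choose (N - 1) : ℂ) •
        ∑ k ∈ Finset.range (N + 1), ((-1 : ℂ) ^ k * (N.choose k : ℂ)) •
          expandYX M G₀ (i - ((n : ℤ) + (k : ℤ))) (j + ((n : ℤ) + (k : ℤ))) := by
      refine finsum_congr (fun n => ?_)
      rw [h2]
      have hinner : mulXYpow N (expandYX M G₀) (i - (n : ℤ)) (j + (N : ℤ) + (n : ℤ))
          = ((-1 : ℂ) ^ N) • ∑ k ∈ Finset.range (N + 1),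
            ((-1 : ℂ) ^ k * (N.choose k : ℂ)) •
              expandYX M G₀ (i - ((n : ℤ) + (k : ℤ))) (j + ((n : ℤ) + (k : ℤ))) := by
        rw [Finset.smul_sum, ← Finset.sum_range_reflect]
        simp only [mulXYpow]
        refine Finset.sum_congr rfl (fun k hk => ?_)
        have hkN : k ≤ N := by
          simp only [Finset.mem_range] at hk; omega
        rw [show N + 1 - 1 - k = N - k from rfl]
        rw [smul_smul]
        have hsc : ((-1 : ℂ)) ^ N * ((-1 : ℂ) ^ (N - k) * ((N.choose (N - k)) : ℂ))
            = (-1 : ℂ) ^ k * (N.choose k : ℂ) := by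
          rw [Nat.choose_symm hkN, ← mul_assoc, ← pow_add,
            show N + (N - k) = 2 * (N - k) + k by omega, pow_add, pow_mul]
          norm_num
        rw [hsc]
        rw [show i - (n : ℤ) - ((N : ℤ) - (k : ℤ)) = i - ((n : ℤ) + ((N - k : ℕ) : ℤ)) by
            push_cast [Nat.cast_sub hkN]; ring,
          show j + (N : ℤ) + (n : ℤ) - (k : ℤ) = j + ((n : ℤ) + ((N - k : ℕ) : ℤ)) by
            push_cast [Nat.cast_sub hkN]; ring]
      rw [hinner, smul_smul]
      rw [show ((-1 : ℂ) ^ N * ((n + N - 1).choose (N - 1) : ℂ)) * (-1 : ℂ) ^ N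
          = ((n + N - 1).choose (N - 1) : ℂ) by
        rw [mul_comm, ← mul_assoc, ← mul_pow]; norm_num]
    calc expandYX N (mulXYpow N f) i j
        = ∑ᶠ n : ℕ, ((-1 : ℂ) ^ N * ((n + N - 1).choose (N - 1) : ℂ)) •
            mulXYpow N f (i - (n : ℤ)) (j + (N : ℤ) + (n : ℤ)) := rfl
      _ = _ := step
      _ = expandYX M G₀ (i - (0 : ℤ)) (j + (0 : ℤ)) := hcore
      _ = expandYX M G₀ i j := by norm_num


end
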